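/- arXiv:1010.0418 — 2 statements merged into one kernel-verified Lean document; each statement's English description precedes it below -/
import Mathlib

section
/- For every probability distribution q on a finite set S that is a type of a sequence of length l (i.e., q(s) = N(s)/l for nonnegative integers N(s) summing to l), the product measure q^{⊗l} assigns to the type class T_q^l = {s^l ∈ S^l : the empirical distribution of s^l equals q} at least probability 1/(l+1)^{|S|}. -/
open Nat Finset
set_option linter.unusedSectionVars false

section aux
variable {S : Type*} [Fintype S] [DecidableEq S] {l : ℕ}

def cntF (u : Fin l → S) (s : S) : ℕ := (Finset.univ.filter fun i => u i = s).card

lemma sum_cntF (u : Fin l → S) : ∑ s, cntF u s = l := by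
  have := Finset.card_eq_sum_card_fiberwise (f := u)
    (fun i (_ : i ∈ Finset.univ) => Finset.mem_univ (u i))
  simpa [cntF] using this.symm

lemma cntF_le (u : Fin l → S) (s : S) : cntF u s ≤ l := by
  simpa [cntF] using Finset.card_filter_le Finset.univ (fun i => u i = s)

-- product over a sequence as product over fibers
lemma prod_pow_cntF (f : S → ℝ) (u : Fin l → S) :
    ∏ i, f (u i) = ∏ s, f s ^ (cntF u s) := by
  rw [← Finset.prod_fiberwise_of_maps_to (g := u) (fun i _ => Finset.mem_univ (u i)) (fun i => f (u i))]
  refine Finset.prod_congr rfl fun s _ => ?_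
  rw [Finset.prod_congr rfl (fun i hi => by rw [(Finset.mem_filter.mp hi).2]),
    Finset.prod_const]
  rfl



/-- build a permutation from a family of fiber equivs -/
noncomputable def permOf (u v : Fin l → S)
    (e : ∀ s : S, {i // v i = s} ≃ {j // u j = s}) : Equiv.Perm (Fin l) :=
  (Equiv.sigmaFiberEquiv v).symm.trans ((Equiv.sigmaCongrRight e).trans (Equiv.sigmaFiberEquiv u))

set_option linter.unusedSectionVars false in
lemma comp_permOf (u v : Fin l → S) (e : ∀ s : S, {i // v i = s} ≃ {j // u j = s}) :
    u ∘ (permOf u v e) = v := by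
  funext i
  exact (e (v i) ⟨i, rfl⟩).2

/-- the equiv between {σ // u ∘ σ = v} and families of fiber equivs -/
noncomputable def stabEquiv (u v : Fin l → S) :
    {σ : Equiv.Perm (Fin l) // u ∘ σ = v} ≃ (∀ s : S, {i // v i = s} ≃ {j // u j = s}) where
  toFun σ s := Equiv.subtypeEquiv σ.1 (fun i => by
    constructor
    · rintro rfl; exact (congrFun σ.2 i).symm ▸ rfl
    · intro h; rw [← h, ← congrFun σ.2 i]; rfl)
  invFun e := ⟨permOf u v e, comp_permOf u v e⟩
  left_inv σ := by
    ext i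
    rfl
  right_inv e := by
    funext s
    ext ⟨i, hi⟩
    subst hi
    rfl

lemma cntF_comp_perm (u : Fin l → S) (σ : Equiv.Perm (Fin l)) : cntF (u ∘ σ) = cntF u := by
  funext s
  unfold cntF
  rw [← Fintype.card_subtype, ← Fintype.card_subtype]
  exact Fintype.card_congr (Equiv.subtypeEquiv σ (fun i => Iff.rfl))

open Classical in
lemma stab_card (u v : Fin l → S) (h : cntF v = cntF u) :
    (Finset.univ.filter fun σ : Equiv.Perm (Fin l) => u ∘ σ = v).card
      = ∏ s, (cntF u s)! := by
  rw [← Fintype.card_subtype]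
  rw [Fintype.card_congr (stabEquiv u v)]
  rw [Fintype.card_pi]
  refine Finset.prod_congr rfl fun s _ => ?_
  have hcard : Fintype.card {i // v i = s} = Fintype.card {j // u j = s} := by
    rw [Fintype.card_subtype, Fintype.card_subtype]
    exact congrFun h s
  rw [Fintype.card_equiv (Fintype.equivOfCardEq hcard), hcard, Fintype.card_subtype]
  rfl

open Classical in
lemma typeclass_card (u : Fin l → S) :
    (Finset.univ.filter fun v : Fin l → S => cntF v = cntF u).card * ∏ s, (cntF u s)!
      = l ! := by
  have h1 : Fintype.card (Equiv.Perm (Fin l)) = l ! := by rw [Fintype.card_perm, Fintype.card_fin]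
  have h2 : (Finset.univ : Finset (Equiv.Perm (Fin l))).card = l ! := h1
  rw [← h2]
  rw [Finset.card_eq_sum_card_fiberwise
    (f := fun σ : Equiv.Perm (Fin l) => u ∘ σ)
    (t := Finset.univ.filter fun v : Fin l → S => cntF v = cntF u)
    (fun σ _ => Finset.mem_filter.mpr ⟨Finset.mem_univ _, cntF_comp_perm u σ⟩)]
  rw [Finset.sum_congr rfl (fun v hv => stab_card u v (Finset.mem_filter.mp hv).2)]
  rw [Finset.sum_const, smul_eq_mul]

-- aux: (m+d)! ≤ m! * (m+d)^d
lemma fact_le_aux (m : ℕ) : ∀ d : ℕ, (m + d)! ≤ m ! * (m + d) ^ d := by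
  intro d
  induction d with
  | zero => simp
  | succ d ih =>
    calc (m + (d+1))! = (m + d + 1) * (m + d)! := by rw [show m + (d+1) = (m+d)+1 from rfl, Nat.factorial_succ]
    _ ≤ (m + d + 1) * (m ! * (m + d) ^ d) := Nat.mul_le_mul_left _ ih
    _ ≤ (m + d + 1) * (m ! * (m + d + 1) ^ d) := by
        exact Nat.mul_le_mul_left _ (Nat.mul_le_mul_left _ (Nat.pow_le_pow_left (Nat.le_succ _) d))
    _ = m ! * (m + (d+1)) ^ (d+1) := by ring

-- key nat inequality: n! * n^m ≤ m! * n^n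
lemma key_nat (m n : ℕ) : n ! * n ^ m ≤ m ! * n ^ n := by
  rcases le_or_gt n m with h | h
  · obtain ⟨d, rfl⟩ := Nat.exists_eq_add_of_le h
    calc n ! * n ^ (n + d) = (n ! * n ^ d) * n ^ n := by ring
    _ ≤ (n ! * (n+1) ^ d) * n ^ n :=
        Nat.mul_le_mul_right _ (Nat.mul_le_mul_left _ (Nat.pow_le_pow_left (Nat.le_succ _) d))
    _ ≤ (n + d)! * n ^ n := Nat.mul_le_mul_right _ Nat.factorial_mul_pow_le_factorial
  · obtain ⟨d, rfl⟩ := Nat.exists_eq_add_of_le h.le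
    calc (m + d)! * (m + d) ^ m ≤ (m ! * (m + d) ^ d) * (m + d) ^ m :=
        Nat.mul_le_mul_right _ (fact_le_aux m d)
    _ = m ! * (m + d) ^ (m + d) := by rw [mul_assoc, ← pow_add]; ring_nf

open Classical in
lemma class_ineq_nat (u t : Fin l → S) :
    (Finset.univ.filter fun v : Fin l → S => cntF v = cntF u).card * ∏ s, (cntF t s) ^ (cntF u s)
      ≤ (Finset.univ.filter fun v : Fin l → S => cntF v = cntF t).card * ∏ s, (cntF t s) ^ (cntF t s) := by
  have hA := typeclass_card u
  have hB := typeclass_card t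
  set M := cntF u with hM
  set N := cntF t with hN
  set Tu := (Finset.univ.filter fun v : Fin l → S => cntF v = M).card with hTu
  set Tt := (Finset.univ.filter fun v : Fin l → S => cntF v = N).card with hTt
  have hpos : 0 < (∏ s, (M s)!) * (∏ s, (N s)!) :=
    Nat.mul_pos (Finset.prod_pos fun s _ => Nat.factorial_pos _)
      (Finset.prod_pos fun s _ => Nat.factorial_pos _)
  refine Nat.le_of_mul_le_mul_right ?_ hpos
  calc (Tu * ∏ s, N s ^ M s) * ((∏ s, (M s)!) * (∏ s, (N s)!))
      = (Tu * ∏ s, (M s)!) * ∏ s, ((N s)! * N s ^ M s) := by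
        rw [Finset.prod_mul_distrib]; ring
    _ = l ! * ∏ s, ((N s)! * N s ^ M s) := by rw [hA]
    _ ≤ l ! * ∏ s, ((M s)! * N s ^ N s) :=
        Nat.mul_le_mul_left _ (Finset.prod_le_prod' fun s _ => key_nat (M s) (N s))
    _ = (Tt * ∏ s, (N s)!) * ∏ s, ((M s)! * N s ^ N s) := by rw [hB]
    _ = (Tt * ∏ s, N s ^ N s) * ((∏ s, (M s)!) * (∏ s, (N s)!)) := by
        rw [Finset.prod_mul_distrib]; ring

end aux

/-- The empirical distribution (type) of the sequence `t : Fin l → S`. -/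
noncomputable def empDist {S : Type*} [Fintype S] [DecidableEq S] {l : ℕ}
    (t : Fin l → S) (s : S) : ℝ :=
  ((Finset.univ.filter fun i => t i = s).card : ℝ) / l

section main
variable {S : Type*} [Fintype S] [DecidableEq S] {l : ℕ}

lemma empDist_eq (t : Fin l → S) (s : S) : empDist t s = (cntF t s : ℝ) / l := rfl

open Classical in
lemma class_sum_eq (t u : Fin l → S) :
    ∑ sl ∈ Finset.univ.filter (fun v : Fin l → S => cntF v = cntF u), ∏ i, empDist t (sl i)
      = (((Finset.univ.filter fun v : Fin l → S => cntF v = cntF u).card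
          * ∏ s, (cntF t s) ^ (cntF u s) : ℕ) : ℝ) / (l : ℝ) ^ l := by
  have hterm : ∀ sl ∈ Finset.univ.filter (fun v : Fin l → S => cntF v = cntF u),
      ∏ i, empDist t (sl i) = (∏ s, ((cntF t s : ℝ)) ^ (cntF u s)) / (l : ℝ) ^ l := by
    intro sl hsl
    have hc := (Finset.mem_filter.mp hsl).2
    rw [prod_pow_cntF (empDist t) sl, hc]
    simp_rw [empDist_eq, div_pow]
    rw [Finset.prod_div_distrib, Finset.prod_pow_eq_pow_sum, sum_cntF]
  rw [Finset.sum_congr rfl hterm, Finset.sum_const, nsmul_eq_mul]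
  push_cast
  ring

end main

open Classical in
/-- for every type `q = empDist t` of a sequence of length `l`, the product
measure `q^{⊗l}` of its type class `{s^l : empirical distribution of s^l = q}` is at least
`1/(l+1)^{|S|}`. -/
theorem stmt_1 {S : Type*} [Fintype S] [DecidableEq S] (l : ℕ) (hl : 0 < l)
    (t : Fin l → S) :
    ∑ sl : Fin l → S,
        (if empDist sl = empDist t then ∏ i, empDist t (sl i) else 0) ≥
      1 / ((l : ℝ) + 1) ^ (Fintype.card S) := by
  have hl0 : (l : ℝ) ≠ 0 := Nat.cast_ne_zero.mpr hl.ne'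
  -- the if-sum equals the filter sum over the type class of t
  have hiff : ∀ v : Fin l → S, empDist v = empDist t ↔ cntF v = cntF t := by
    intro v
    constructor
    · intro h; funext s
      have := congrFun h s
      rw [empDist_eq, empDist_eq] at this
      field_simp at this
      exact_mod_cast this
    · intro h; funext s; rw [empDist_eq, empDist_eq, h]
  have hLHS : (∑ sl : Fin l → S,
        (if empDist sl = empDist t then ∏ i, empDist t (sl i) else 0))
      = ∑ sl ∈ Finset.univ.filter (fun v : Fin l → S => cntF v = cntF t),
          ∏ i, empDist t (sl i) := by
    rw [Finset.sum_filter]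
    exact Finset.sum_congr rfl fun sl _ => if_congr (hiff sl) rfl rfl
  set R : ℝ := ∑ sl ∈ Finset.univ.filter (fun v : Fin l → S => cntF v = cntF t),
      ∏ i, empDist t (sl i) with hR
  -- each class sum is at most R
  have hmono : ∀ u : Fin l → S,
      (∑ sl ∈ Finset.univ.filter (fun v : Fin l → S => cntF v = cntF u),
        ∏ i, empDist t (sl i)) ≤ R := by
    intro u
    rw [hR, class_sum_eq t u, class_sum_eq t t]
    apply div_le_div_of_nonneg_right ?_ (by positivity)
    exact_mod_cast class_ineq_nat u t
  -- total sum is 1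
  have hsum1 : ∑ s, empDist t s = 1 := by
    simp_rw [empDist_eq]
    rw [← Finset.sum_div, ← Nat.cast_sum, sum_cntF, div_self hl0]
  have htotal : ∑ q' ∈ Finset.univ.image (cntF : (Fin l → S) → S → ℕ),
      (∑ sl ∈ Finset.univ.filter (fun v : Fin l → S => cntF v = q'),
        ∏ i, empDist t (sl i)) = 1 := by
    rw [Finset.sum_fiberwise_of_maps_to
      (fun v _ => Finset.mem_image_of_mem _ (Finset.mem_univ v))]
    rw [show (Finset.univ : Finset (Fin l → S)) = Fintype.piFinset fun _ => Finset.univ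
      from (Fintype.piFinset_univ).symm]
    rw [← Finset.prod_univ_sum (fun _ : Fin l => (Finset.univ : Finset S))
      (fun _ s => empDist t s)]
    simp [hsum1]
  -- number of types is at most (l+1)^|S|
  have himg : ((Finset.univ.image (cntF : (Fin l → S) → S → ℕ)).card : ℝ)
      ≤ ((l : ℝ) + 1) ^ (Fintype.card S) := by
    open Fin.NatCast in
    have hcard : (Finset.univ.image (cntF : (Fin l → S) → S → ℕ)).card
        ≤ (l + 1) ^ (Fintype.card S) := by
      have hinj : Set.InjOn (fun (M : S → ℕ) (s : S) => ((M s : Fin (l+1))))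
          (Finset.univ.image (cntF : (Fin l → S) → S → ℕ)) := by
        intro M₁ h₁ M₂ h₂ h
        obtain ⟨u₁, _, rfl⟩ := Finset.mem_image.mp h₁
        obtain ⟨u₂, _, rfl⟩ := Finset.mem_image.mp h₂
        funext s
        have := congrFun h s
        have e1 : ((cntF u₁ s : Fin (l+1)) : ℕ) = cntF u₁ s :=
          Fin.val_cast_of_lt (Nat.lt_succ_of_le (cntF_le u₁ s))
        have e2 : ((cntF u₂ s : Fin (l+1)) : ℕ) = cntF u₂ s :=
          Fin.val_cast_of_lt (Nat.lt_succ_of_le (cntF_le u₂ s))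
        dsimp only at this
        rw [← e1, ← e2, this]
      calc (Finset.univ.image (cntF : (Fin l → S) → S → ℕ)).card
          ≤ (Finset.univ : Finset (S → Fin (l+1))).card :=
            Finset.card_le_card_of_injOn _ (fun M _ => Finset.mem_univ _) hinj
        _ = (l + 1) ^ (Fintype.card S) := by
            rw [Finset.card_univ, Fintype.card_fun, Fintype.card_fin]
    calc ((Finset.univ.image (cntF : (Fin l → S) → S → ℕ)).card : ℝ)
        ≤ (((l + 1) ^ (Fintype.card S) : ℕ) : ℝ) := Nat.cast_le.mpr hcard
      _ = ((l : ℝ) + 1) ^ (Fintype.card S) := by push_cast; ring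
  have hR0 : 0 ≤ R :=
    Finset.sum_nonneg fun sl _ => Finset.prod_nonneg fun i _ => by
      rw [empDist_eq]; positivity
  have hone : (1 : ℝ) ≤ ((l : ℝ) + 1) ^ (Fintype.card S) * R := by
    calc (1 : ℝ) = _ := htotal.symm
      _ ≤ ∑ _q' ∈ Finset.univ.image (cntF : (Fin l → S) → S → ℕ), R :=
          Finset.sum_le_sum fun q' hq' => by
            obtain ⟨u, _, rfl⟩ := Finset.mem_image.mp hq'
            exact hmono u
      _ = ((Finset.univ.image (cntF : (Fin l → S) → S → ℕ)).card : ℝ) * R := by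
          rw [Finset.sum_const, nsmul_eq_mul]
      _ ≤ ((l : ℝ) + 1) ^ (Fintype.card S) * R := mul_le_mul_of_nonneg_right himg hR0
  rw [ge_iff_le, hLHS, div_le_iff₀ (by positivity)]
  rwa [mul_comm] at hone
end

section
/- Let F be a convex subset of the set of channels C(H,K), and let N, Ñ ∈ ri F. Then the zero-error quantum capacity satisfies Q_0(N) = Q_0(Ñ); likewise C_0(N) = C_0(Ñ) and C_{0EA}(N) = C_{0EA}(Ñ). In particular each of these zero-error capacity functions is constant on the relative interior of any face of C(H,K). -/
open scoped ComplexOrder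

/-- A density operator: positive semidefinite with trace one. -/
def IsState {γ : Type*} [Fintype γ] [DecidableEq γ] (ρ : Matrix γ γ ℂ) : Prop :=
  ρ.PosSemidef ∧ ρ.trace = 1

/-- Kraus characterization of quantum channels (CPTP maps). -/
def IsCPTP {ι κ : Type*} [Fintype ι] [DecidableEq ι] [Fintype κ] [DecidableEq κ]
    (N : Matrix ι ι ℂ →ₗ[ℂ] Matrix κ κ ℂ) : Prop :=
  ∃ (m : ℕ) (G : Fin m → Matrix κ ι ℂ),
    (∀ a, N a = ∑ j, G j * a * (G j).conjTranspose) ∧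
      (∑ j, (G j).conjTranspose * G j = 1)

/-- The elementary tensor `a₁ ⊗ ⋯ ⊗ a_l` of matrices. -/
def elemTensor {ι : Type*} {l : ℕ} (a : Fin l → Matrix ι ι ℂ) :
    Matrix (Fin l → ι) (Fin l → ι) ℂ :=
  Matrix.of fun x y => ∏ i, a i (x i) (y i)

/-- `Tl` is the `l`-th tensor power `N^{⊗l}` of the superoperator `N` (characterized
by its action on elementary tensors). -/
def IsTensorPow {ι κ : Type*} [Fintype ι] [Fintype κ] (l : ℕ)
    (N : Matrix ι ι ℂ →ₗ[ℂ] Matrix κ κ ℂ)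
    (Tl : Matrix (Fin l → ι) (Fin l → ι) ℂ →ₗ[ℂ] Matrix (Fin l → κ) (Fin l → κ) ℂ) :
    Prop :=
  ∀ a : Fin l → Matrix ι ι ℂ, Tl (elemTensor a) = elemTensor fun i => N (a i)

/-- `Λ ⊗ id`, applied on the first tensor factor of a bipartite operator. -/
def appLeft {F F' G : Type*} (Λ : Matrix F F ℂ →ₗ[ℂ] Matrix G G ℂ)
    (σ : Matrix (F × F') (F × F') ℂ) : Matrix (G × F') (G × F') ℂ :=
  Matrix.of fun p q => Λ (Matrix.of fun f g => σ (f, p.2) (g, q.2)) p.1 q.1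

/-- The maximally entangled state vector on `ℂᵏ ⊗ ℂᵏ`. -/
noncomputable def maxEntVec (k : ℕ) : Fin k × Fin k → ℂ :=
  fun p => if p.1 = p.2 then ((1 / Real.sqrt k : ℝ) : ℂ) else 0

/-- The rank-one projection `|x⟩⟨x|`. -/
noncomputable def rankOneProj {k : ℕ} (x : EuclideanSpace ℂ (Fin k)) :
    Matrix (Fin k) (Fin k) ℂ :=
  Matrix.of fun i j => x i * (starRingEnd ℂ) (x j)

variable {ι κ : Type*} [Fintype ι] [DecidableEq ι] [Fintype κ] [DecidableEq κ]

/-- `k(l,N)`: the maximal dimension of an `(l,k)` zero-error quantum code for `N`. -/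
noncomputable def kQuantum (l : ℕ) (N : Matrix ι ι ℂ →ₗ[ℂ] Matrix κ κ ℂ) : ℕ :=
  sSup {k : ℕ | 0 < k ∧
    ∃ (Tl : Matrix (Fin l → ι) (Fin l → ι) ℂ →ₗ[ℂ] Matrix (Fin l → κ) (Fin l → κ) ℂ)
      (P : Matrix (Fin k) (Fin k) ℂ →ₗ[ℂ] Matrix (Fin l → ι) (Fin l → ι) ℂ)
      (R : Matrix (Fin l → κ) (Fin l → κ) ℂ →ₗ[ℂ] Matrix (Fin k) (Fin k) ℂ),
      IsTensorPow l N Tl ∧ IsCPTP P ∧ IsCPTP R ∧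
      ∀ x : EuclideanSpace ℂ (Fin k), ‖x‖ = 1 →
        ∑ i, ∑ j, (starRingEnd ℂ) (x i) * (R (Tl (P (rankOneProj x)))) i j * x j = 1}

/-- `M(l,N)`: the maximal size of an `(l,M)` zero-error classical code for `N`. -/
noncomputable def mClassical (l : ℕ) (N : Matrix ι ι ℂ →ₗ[ℂ] Matrix κ κ ℂ) : ℕ :=
  sSup {M : ℕ | 0 < M ∧
    ∃ (Tl : Matrix (Fin l → ι) (Fin l → ι) ℂ →ₗ[ℂ] Matrix (Fin l → κ) (Fin l → κ) ℂ)
      (ρ : Fin M → Matrix (Fin l → ι) (Fin l → ι) ℂ)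
      (D : Fin M → Matrix (Fin l → κ) (Fin l → κ) ℂ),
      IsTensorPow l N Tl ∧ (∀ m, IsState (ρ m)) ∧ (∀ m, (D m).PosSemidef) ∧
      (∑ m, D m = 1) ∧ ∀ m, (Tl (ρ m) * D m).trace = 1}

/-- `M_EA(l,N)`: the maximal size of an `(l,M)` zero-error entanglement-assisted
code for `N`. -/
noncomputable def mEA (l : ℕ) (N : Matrix ι ι ℂ →ₗ[ℂ] Matrix κ κ ℂ) : ℕ :=
  sSup {M : ℕ | 0 < M ∧
    ∃ (nF nF' : ℕ)
      (Tl : Matrix (Fin l → ι) (Fin l → ι) ℂ →ₗ[ℂ] Matrix (Fin l → κ) (Fin l → κ) ℂ)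
      (σ : Matrix (Fin nF × Fin nF') (Fin nF × Fin nF') ℂ)
      (P : Fin M → (Matrix (Fin nF) (Fin nF) ℂ →ₗ[ℂ] Matrix (Fin l → ι) (Fin l → ι) ℂ))
      (D : Fin M → Matrix ((Fin l → κ) × Fin nF') ((Fin l → κ) × Fin nF') ℂ),
      IsTensorPow l N Tl ∧ IsState σ ∧ (∀ m, IsCPTP (P m)) ∧
      (∀ m, (D m).PosSemidef) ∧ (∑ m, D m = 1) ∧
      ∀ m, (appLeft (Tl ∘ₗ P m) σ * D m).trace = 1}

/-- The zero-error quantum capacity `Q₀(N) = lim (1/l) log k(l,N)`. -/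
noncomputable def Q0 (N : Matrix ι ι ℂ →ₗ[ℂ] Matrix κ κ ℂ) : ℝ :=
  Filter.limsup (fun l : ℕ => Real.logb 2 (kQuantum l N) / l) Filter.atTop

/-- The classical zero-error capacity `C₀(N) = lim (1/l) log M(l,N)`. -/
noncomputable def C0 (N : Matrix ι ι ℂ →ₗ[ℂ] Matrix κ κ ℂ) : ℝ :=
  Filter.limsup (fun l : ℕ => Real.logb 2 (mClassical l N) / l) Filter.atTop

/-- The entanglement-assisted zero-error capacity `C₀EA(N) = lim (1/l) log M_EA(l,N)`. -/
noncomputable def C0EA (N : Matrix ι ι ℂ →ₗ[ℂ] Matrix κ κ ℂ) : ℝ :=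
  Filter.limsup (fun l : ℕ => Real.logb 2 (mEA l N) / l) Filter.atTop

/-- The algebraic relative interior of a set `s` in a complex vector space: `x ∈ s`
such that every segment from a point of `s` to `x` can be prolonged beyond `x`
within `s`.  For convex sets in finite dimension this is the relative interior. -/
def AlgRelInterior {V : Type*} [AddCommGroup V] [Module ℂ V] (s : Set V) (x : V) :
    Prop :=
  x ∈ s ∧ ∀ y ∈ s, ∃ t : ℝ, 1 < t ∧ y + ((t : ℝ) : ℂ) • (x - y) ∈ s

section AuxPSD

open Matrix

variable {n n' : Type*} [Fintype n] [DecidableEq n] [Fintype n'] [DecidableEq n']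

lemma psd_trace_nonneg {A : Matrix n n ℂ} (hA : A.PosSemidef) : 0 ≤ A.trace := by
  rw [Matrix.trace]
  refine Finset.sum_nonneg fun i _ => ?_
  exact hA.diag_nonneg

lemma psd_mul_trace_nonneg {A B : Matrix n n ℂ} (hA : A.PosSemidef) (hB : B.PosSemidef) :
    0 ≤ (A * B).trace := by
  obtain ⟨C, rfl⟩ : ∃ C : Matrix n n ℂ, B = Cᴴ * C := by
    open scoped MatrixOrder in
    obtain ⟨C, rfl⟩ := CStarAlgebra.nonneg_iff_eq_star_mul_self.mp hB.nonneg
    exact ⟨C, rfl⟩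
  have h1 : (A * (Cᴴ * C)).trace = (C * A * Cᴴ).trace := by
    rw [← Matrix.mul_assoc, Matrix.trace_mul_cycle]
  rw [h1]
  exact psd_trace_nonneg (hA.mul_mul_conjTranspose_same C)

lemma psd_trace_mul_le {A D : Matrix n n ℂ} (hA : A.PosSemidef)
    (hD1 : (1 - D).PosSemidef) : (A * D).trace ≤ A.trace := by
  have h := psd_mul_trace_nonneg hA hD1
  rw [Matrix.mul_sub, Matrix.mul_one, Matrix.trace_sub, sub_nonneg] at h
  exact h

lemma psd_sum {W : Type*} (s : Finset W) (f : W → Matrix n n ℂ)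
    (h : ∀ w ∈ s, (f w).PosSemidef) : (∑ w ∈ s, f w).PosSemidef :=
  Finset.sum_induction f _ (fun _ _ ha hb => ha.add hb) Matrix.PosSemidef.zero h

lemma trace_kraus_sum {W : Type*} (s : Finset W) (V : W → Matrix n' n ℂ)
    (ρ : Matrix n n ℂ) :
    (∑ w ∈ s, V w * ρ * (V w)ᴴ).trace = ((∑ w ∈ s, (V w)ᴴ * V w) * ρ).trace := by
  rw [Matrix.trace_sum, Finset.sum_mul, Matrix.trace_sum]
  refine Finset.sum_congr rfl fun w _ => ?_
  rw [Matrix.trace_mul_cycle, Matrix.mul_assoc]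

lemma core_filter {W : Type*} [Fintype W] (p : W → Prop) [DecidablePred p]
    (V : W → Matrix n' n ℂ) (ρ : Matrix n n ℂ) (D : Matrix n' n' ℂ)
    (hρ : ρ.PosSemidef) (hρtr : ρ.trace = 1)
    (hD : D.PosSemidef) (hD1 : (1 - D).PosSemidef)
    (hV : ∑ w, (V w)ᴴ * V w = 1) (c : ℂ)
    (hV0 : ∑ w ∈ Finset.univ.filter p, (V w)ᴴ * V w = c • 1)
    (h1 : ((∑ w, V w * ρ * (V w)ᴴ) * D).trace = 1) :
    ((∑ w ∈ Finset.univ.filter p, V w * ρ * (V w)ᴴ) * D).trace = c := by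
  classical
  set S0 : Matrix n' n' ℂ := ∑ w ∈ Finset.univ.filter p, V w * ρ * (V w)ᴴ with hS0
  set S1 : Matrix n' n' ℂ := ∑ w ∈ Finset.univ.filter (fun w => ¬ p w), V w * ρ * (V w)ᴴ with hS1
  have hsplit : S0 + S1 = ∑ w, V w * ρ * (V w)ᴴ :=
    Finset.sum_filter_add_sum_filter_not _ _ _
  have hS0psd : S0.PosSemidef :=
    psd_sum _ _ fun w _ => hρ.mul_mul_conjTranspose_same _
  have hS1psd : S1.PosSemidef :=
    psd_sum _ _ fun w _ => hρ.mul_mul_conjTranspose_same _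
  have trS0 : S0.trace = c := by
    rw [hS0, trace_kraus_sum, hV0, Matrix.smul_mul, Matrix.one_mul, Matrix.trace_smul, hρtr,
      smul_eq_mul, mul_one]
  have hVnot : ∑ w ∈ Finset.univ.filter (fun w => ¬ p w), (V w)ᴴ * V w = 1 - c • 1 := by
    have := Finset.sum_filter_add_sum_filter_not Finset.univ p (fun w => (V w)ᴴ * V w)
    rw [hV0, hV] at this
    linear_combination (norm := abel) this
  have trS1 : S1.trace = 1 - c := by
    rw [hS1, trace_kraus_sum, hVnot, Matrix.sub_mul, Matrix.one_mul, Matrix.smul_mul,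
      Matrix.one_mul, Matrix.trace_sub, Matrix.trace_smul, hρtr, smul_eq_mul, mul_one]
  have hab : (S0 * D).trace + (S1 * D).trace = 1 := by
    rw [← Matrix.trace_add, ← Matrix.add_mul, hsplit]
    exact h1
  have ha : (S0 * D).trace ≤ c := trS0 ▸ psd_trace_mul_le hS0psd hD1
  have hb : (S1 * D).trace ≤ 1 - c := trS1 ▸ psd_trace_mul_le hS1psd hD1
  have hc : c ≤ (S0 * D).trace := by
    have : (S0 * D).trace = 1 - (S1 * D).trace := by linear_combination hab
    rw [this]
    have := sub_le_sub_left hb (1 : ℂ)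
    simpa using this
  exact le_antisymm ha hc

end AuxPSD

section AuxTensor

open Matrix

set_option linter.unusedSectionVars false

variable {l : ℕ}

/-- Rectangular elementary tensor. -/
def eT {α β : Type*} {l : ℕ} (A : Fin l → Matrix α β ℂ) :
    Matrix (Fin l → α) (Fin l → β) ℂ :=
  Matrix.of fun p q => ∏ i, A i (p i) (q i)

lemma elemTensor_eq_eT {α : Type*} (a : Fin l → Matrix α α ℂ) : elemTensor a = eT a := rfl

lemma eT_mul {α β γ : Type*} [Fintype β] (A : Fin l → Matrix α β ℂ)
    (B : Fin l → Matrix β γ ℂ) : eT A * eT B = eT fun i => A i * B i := by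
  ext p q
  simp only [eT, Matrix.mul_apply, Matrix.of_apply]
  rw [Finset.prod_univ_sum]
  rw [show (Fintype.piFinset fun _ : Fin l => (Finset.univ : Finset β)) = Finset.univ from
    Fintype.piFinset_univ]
  exact Finset.sum_congr rfl fun r _ => (Finset.prod_mul_distrib).symm

lemma eT_conjTranspose {α β : Type*} (A : Fin l → Matrix α β ℂ) :
    (eT A)ᴴ = eT fun i => (A i)ᴴ := by
  ext p q
  simp [eT, Matrix.conjTranspose_apply, map_prod]

lemma eT_one {α : Type*} [Fintype α] [DecidableEq α] :
    eT (fun _ : Fin l => (1 : Matrix α α ℂ)) = 1 := by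
  ext p q
  simp only [eT, Matrix.of_apply, Matrix.one_apply]
  by_cases h : p = q
  · subst h; simp
  · rw [if_neg h]
    obtain ⟨i, hi⟩ := Function.ne_iff.mp h
    exact Finset.prod_eq_zero (Finset.mem_univ i) (by simp [hi])

lemma eT_smul {α β : Type*} (c : ℂ) (A : Fin l → Matrix α β ℂ) :
    eT (fun i => c • A i) = c ^ l • eT A := by
  ext p q
  simp only [eT, Matrix.of_apply, Matrix.smul_apply, Pi.smul_apply, smul_eq_mul]
  rw [Finset.prod_mul_distrib, Finset.prod_const, Finset.card_univ, Fintype.card_fin]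

lemma eT_sum {α β J : Type*} [Fintype J] (A : Fin l → J → Matrix α β ℂ) :
    eT (fun i => ∑ j, A i j) = ∑ w : Fin l → J, eT fun i => A i (w i) := by
  ext p q
  simp only [eT, Matrix.of_apply, Matrix.sum_apply]
  rw [Finset.prod_univ_sum]
  rw [show (Fintype.piFinset fun _ : Fin l => (Finset.univ : Finset J)) = Finset.univ from
    Fintype.piFinset_univ]

lemma eT_stdBasis {α : Type*} [DecidableEq α] (p q : Fin l → α) :
    eT (fun i => Matrix.single (p i) (q i) (1 : ℂ)) = Matrix.single p q 1 := by
  ext x y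
  simp only [eT, Matrix.of_apply, Matrix.single, Matrix.of_apply]
  by_cases h : p = x ∧ q = y
  · obtain ⟨rfl, rfl⟩ := h
    simp
  · rw [if_neg h]
    rw [Decidable.not_and_iff_or_not] at h
    rcases h with h | h
    · obtain ⟨i, hi⟩ := Function.ne_iff.mp h
      exact Finset.prod_eq_zero (Finset.mem_univ i) (by simp [hi])
    · obtain ⟨i, hi⟩ := Function.ne_iff.mp h
      exact Finset.prod_eq_zero (Finset.mem_univ i) (by simp [hi])

end AuxTensor

section AuxKrausPow

open Matrix

variable {ι κ : Type*} [Fintype ι] [DecidableEq ι] [Fintype κ] [DecidableEq κ]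

/-- Uniqueness of the tensor power. -/
lemma isTensorPow_unique {l : ℕ} {N : Matrix ι ι ℂ →ₗ[ℂ] Matrix κ κ ℂ}
    {T T' : Matrix (Fin l → ι) (Fin l → ι) ℂ →ₗ[ℂ] Matrix (Fin l → κ) (Fin l → κ) ℂ}
    (h : IsTensorPow l N T) (h' : IsTensorPow l N T') : T = T' := by
  apply LinearMap.ext; intro σ
  have hσ : σ = ∑ p : Fin l → ι, ∑ q : Fin l → ι,
      σ p q • elemTensor (fun i => Matrix.single (p i) (q i) (1 : ℂ)) := by
    conv_lhs => rw [Matrix.matrix_eq_sum_single σ]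
    refine Finset.sum_congr rfl fun p _ => Finset.sum_congr rfl fun q _ => ?_
    rw [elemTensor_eq_eT, eT_stdBasis, Matrix.smul_single, smul_eq_mul, mul_one]
  rw [hσ]
  simp only [map_sum, _root_.map_smul]
  exact Finset.sum_congr rfl fun p _ => Finset.sum_congr rfl fun q _ => by rw [h, h']

/-- The Kraus-operator construction of the tensor power. -/
noncomputable def krausPow {J : Type*} [Fintype J] (l : ℕ) (G : J → Matrix κ ι ℂ) :
    Matrix (Fin l → ι) (Fin l → ι) ℂ →ₗ[ℂ] Matrix (Fin l → κ) (Fin l → κ) ℂ where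
  toFun σ := ∑ w : Fin l → J, eT (fun i => G (w i)) * σ * (eT fun i => G (w i))ᴴ
  map_add' a b := by
    simp only [Matrix.mul_add, Matrix.add_mul, Finset.sum_add_distrib]
  map_smul' c a := by
    simp only [RingHom.id_apply, Finset.smul_sum, Matrix.mul_smul, Matrix.smul_mul]

lemma krausPow_apply {J : Type*} [Fintype J] (l : ℕ) (G : J → Matrix κ ι ℂ)
    (σ : Matrix (Fin l → ι) (Fin l → ι) ℂ) :
    krausPow l G σ = ∑ w : Fin l → J, eT (fun i => G (w i)) * σ * (eT fun i => G (w i))ᴴ :=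
  rfl

lemma isTensorPow_krausPow {J : Type*} [Fintype J] {l : ℕ} {G : J → Matrix κ ι ℂ}
    {N : Matrix ι ι ℂ →ₗ[ℂ] Matrix κ κ ℂ}
    (hG : ∀ a, N a = ∑ j, G j * a * (G j)ᴴ) : IsTensorPow l N (krausPow l G) := by
  intro a
  rw [krausPow_apply, elemTensor_eq_eT, elemTensor_eq_eT]
  have h1 : ∀ w : Fin l → J,
      eT (fun i => G (w i)) * eT a * (eT fun i => G (w i))ᴴ
        = eT fun i => G (w i) * a i * (G (w i))ᴴ := by
    intro w
    rw [eT_mul, eT_conjTranspose, eT_mul]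
  rw [Finset.sum_congr rfl fun w _ => h1 w,
    ← eT_sum (A := fun (i : Fin l) (j : J) => G j * a i * (G j)ᴴ)]
  rw [show (fun i : Fin l => ∑ j, G j * a i * (G j)ᴴ) = fun i => N (a i) from
    funext fun i => (hG (a i)).symm]

lemma krausPow_tp {J : Type*} [Fintype J] {l : ℕ} {G : J → Matrix κ ι ℂ}
    (hG1 : ∑ j, (G j)ᴴ * G j = 1) :
    ∑ w : Fin l → J, (eT fun i => G (w i))ᴴ * eT (fun i => G (w i)) = 1 := by
  have h1 : ∀ w : Fin l → J,
      (eT fun i => G (w i))ᴴ * eT (fun i => G (w i))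
        = eT fun i => (G (w i))ᴴ * G (w i) := by
    intro w; rw [eT_conjTranspose, eT_mul]
  rw [Finset.sum_congr rfl fun w _ => h1 w,
    ← eT_sum (A := fun (_ : Fin l) (j : J) => (G j)ᴴ * G j)]
  rw [show (fun i : Fin l => ∑ j, (G j)ᴴ * G j) = fun _ : Fin l => (1 : Matrix ι ι ℂ) from
    funext fun i => hG1]
  exact eT_one

/-- Sum over words that take only `Sum.inr` values. -/
lemma sum_allRight {γ α β M : Type*} [Fintype γ] [DecidableEq γ] [Fintype α] [Fintype β]
    [AddCommMonoid M]
    (f : (γ → α ⊕ β) → M) [DecidablePred fun w : γ → α ⊕ β => ∀ i, (w i).isRight] :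
    ∑ w ∈ Finset.univ.filter (fun w : γ → α ⊕ β => ∀ i, (w i).isRight), f w
      = ∑ w : γ → β, f fun i => Sum.inr (w i) := by
  classical
  refine Finset.sum_bij' (i := fun (w : γ → α ⊕ β) (hw : w ∈ Finset.univ.filter
      (fun w : γ → α ⊕ β => ∀ i, (w i).isRight)) => fun i : γ =>
      (w i).getRight ((Finset.mem_filter.mp hw).2 i))
    (j := fun (w : γ → β) _ => fun i : γ => Sum.inr (w i)) ?_ ?_ ?_ ?_ ?_
  · intro w hw; exact Finset.mem_univ _
  · intro w hw
    simp only [Finset.mem_filter, Finset.mem_univ, true_and]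
    intro i; simp
  · intro w hw
    funext i
    exact Sum.inr_getRight _ _
  · intro w hw
    funext i
    rfl
  · intro w hw
    congr 1
    funext i
    exact (Sum.inr_getRight _ _).symm

end AuxKrausPow

section AuxKron

open Matrix

set_option linter.unusedSectionVars false

variable {A B C E : Type*} [Fintype A] [Fintype B] [Fintype C] [Fintype E]
  [DecidableEq A] [DecidableEq B] [DecidableEq C] [DecidableEq E]

/-- `G ⊗ 1`. -/
def kronOne {A B C : Type*} [DecidableEq C] (G : Matrix A B ℂ) : Matrix (A × C) (B × C) ℂ :=
  Matrix.of fun p q => G p.1 q.1 * (if p.2 = q.2 then 1 else 0)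

lemma kronOne_mul (G : Matrix A B ℂ) (H : Matrix B E ℂ) :
    kronOne (C := C) (G * H) = kronOne (C := C) G * kronOne (C := C) H := by
  ext p q
  simp only [kronOne, Matrix.of_apply, Matrix.mul_apply, Fintype.sum_prod_type]
  rw [Finset.sum_comm]
  simp [Finset.sum_mul, Finset.mul_sum, mul_ite, ite_mul, mul_comm, mul_assoc, mul_left_comm]

lemma kronOne_conjTranspose (G : Matrix A B ℂ) :
    (kronOne (C := C) G)ᴴ = kronOne Gᴴ := by
  ext p q
  simp only [Matrix.conjTranspose_apply, kronOne, Matrix.of_apply]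
  by_cases h : p.2 = q.2
  · rw [if_pos h.symm, if_pos h]; simp
  · rw [if_neg fun hh => h hh.symm, if_neg h]; simp

lemma kronOne_one : kronOne (C := C) (1 : Matrix A A ℂ) = 1 := by
  ext p q
  simp only [kronOne, Matrix.of_apply, Matrix.one_apply, Prod.ext_iff]
  by_cases h1 : p.1 = q.1 <;> by_cases h2 : p.2 = q.2 <;> simp [h1, h2]

lemma kronOne_smul (c : ℂ) (G : Matrix A B ℂ) :
    kronOne (C := C) (c • G) = c • kronOne G := by
  ext p q
  simp [kronOne, mul_assoc]

lemma kronOne_sum {W : Type*} (s : Finset W) (f : W → Matrix A B ℂ) :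
    kronOne (C := C) (∑ w ∈ s, f w) = ∑ w ∈ s, kronOne (C := C) (f w) := by
  ext p q
  simp [kronOne, Matrix.sum_apply, Finset.sum_mul]

lemma mul_mul_conjT_apply (G : Matrix B A ℂ) (X : Matrix A A ℂ) (H : Matrix B A ℂ) (r s : B) :
    (G * X * Hᴴ) r s = ∑ a, ∑ b, G r a * X a b * (starRingEnd ℂ) (H s b) := by
  rw [Matrix.mul_apply, Finset.sum_comm]
  refine Finset.sum_congr rfl fun a _ => ?_
  rw [Matrix.mul_apply, Finset.sum_mul]
  refine Finset.sum_congr rfl fun b _ => ?_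
  rw [Matrix.conjTranspose_apply]
  rfl

lemma kron_conj_apply (G H : Matrix B A ℂ) (σ : Matrix (A × C) (A × C) ℂ) (p q : B × C) :
    ((kronOne (C := C) G : Matrix (B × C) (A × C) ℂ) * σ
        * ((kronOne (C := C) H : Matrix (B × C) (A × C) ℂ))ᴴ) p q
      = ∑ a : A, ∑ b : A, G p.1 a * σ (a, p.2) (b, q.2) * (starRingEnd ℂ) (H q.1 b) := by
  rw [mul_mul_conjT_apply]
  have key : ∀ u : A × C,
      (∑ v : A × C, kronOne (C := C) G p u * σ u v
          * (starRingEnd ℂ) (kronOne (C := C) H q v))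
        = ∑ b : A, kronOne (C := C) G p u * σ u (b, q.2) * (starRingEnd ℂ) (H q.1 b) := by
    intro u
    rw [Fintype.sum_prod_type]
    refine Finset.sum_congr rfl fun b _ => ?_
    rw [Finset.sum_eq_single q.2]
    · simp [kronOne]
    · intro d _ hd
      have : kronOne (C := C) H q (b, d) = 0 := by
        simp [kronOne, if_neg fun hh : q.2 = d => hd hh.symm]
      rw [this]
      simp
    · intro h; exact absurd (Finset.mem_univ _) h
  rw [Finset.sum_congr rfl fun u _ => key u, Fintype.sum_prod_type]
  refine Finset.sum_congr rfl fun a _ => ?_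
  rw [Finset.sum_eq_single p.2]
  · refine Finset.sum_congr rfl fun b _ => ?_
    simp [kronOne]
  · intro c _ hc
    refine Finset.sum_eq_zero fun b _ => ?_
    have : kronOne (C := C) G p (a, c) = 0 := by
      simp [kronOne, if_neg fun hh : p.2 = c => hc hh.symm]
    rw [this]
    simp
  · intro h; exact absurd (Finset.mem_univ _) h

lemma appLeft_kraus {W : Type*} [Fintype W]
    (Λ : Matrix A A ℂ →ₗ[ℂ] Matrix B B ℂ) (Gs : W → Matrix B A ℂ)
    (hΛ : ∀ a, Λ a = ∑ j, Gs j * a * (Gs j)ᴴ) (σ : Matrix (A × C) (A × C) ℂ) :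
    appLeft Λ σ = ∑ j, kronOne (C := C) (Gs j) * σ * (kronOne (C := C) (Gs j))ᴴ := by
  ext p q
  rw [Matrix.sum_apply]
  rw [show appLeft Λ σ p q = Λ (Matrix.of fun f g => σ (f, p.2) (g, q.2)) p.1 q.1 from rfl]
  rw [hΛ, Matrix.sum_apply]
  refine Finset.sum_congr rfl fun j _ => ?_
  rw [kron_conj_apply, mul_mul_conjT_apply]
  simp

end AuxKron

section AuxState

open Matrix

set_option linter.unusedSectionVars false

variable {n n' : Type*} [Fintype n] [DecidableEq n] [Fintype n'] [DecidableEq n']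

lemma trace_conj_mul (V : Matrix n' n ℂ) (σ : Matrix n n ℂ) (X : Matrix n' n' ℂ) :
    ((V * σ * Vᴴ) * X).trace = (σ * (Vᴴ * X * V)).trace := by
  simp only [Matrix.mul_assoc]
  rw [Matrix.trace_mul_comm]
  simp only [Matrix.mul_assoc]

lemma psd_of_proj {M : Matrix n n ℂ} (hH : Mᴴ = M) (hi : M * M = M) : M.PosSemidef := by
  rw [show M = Mᴴ * M by rw [hH, hi]]
  exact Matrix.posSemidef_conjTranspose_mul_self M

lemma sum_conj_mul_self {k : ℕ} (x : EuclideanSpace ℂ (Fin k)) (hx : ‖x‖ = 1) :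
    ∑ i, (starRingEnd ℂ) (x i) * x i = 1 := by
  have h1 : (inner ℂ x x : ℂ) = ∑ i, (starRingEnd ℂ) (x i) * x i := by
    rw [PiLp.inner_apply]
    exact Finset.sum_congr rfl fun i _ => by rw [RCLike.inner_apply]; ring
  have h2 : (inner ℂ x x : ℂ) = (‖x‖ : ℂ) ^ 2 := inner_self_eq_norm_sq_to_K x
  rw [← h1, h2, hx]
  norm_num

lemma rankOneProj_conjTranspose {k : ℕ} (x : EuclideanSpace ℂ (Fin k)) :
    (rankOneProj x)ᴴ = rankOneProj x := by
  ext i j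
  simp [rankOneProj, Matrix.conjTranspose_apply, mul_comm]

lemma rankOneProj_idem {k : ℕ} (x : EuclideanSpace ℂ (Fin k)) (hx : ‖x‖ = 1) :
    rankOneProj x * rankOneProj x = rankOneProj x := by
  ext i j
  simp only [Matrix.mul_apply, rankOneProj, Matrix.of_apply]
  have : ∀ c : Fin k, x i * (starRingEnd ℂ) (x c) * (x c * (starRingEnd ℂ) (x j))
      = (x i * (starRingEnd ℂ) (x j)) * ((starRingEnd ℂ) (x c) * x c) := by
    intro c; ring
  rw [Finset.sum_congr rfl fun c _ => this c, ← Finset.mul_sum, sum_conj_mul_self x hx,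
    mul_one]

lemma rankOneProj_psd {k : ℕ} (x : EuclideanSpace ℂ (Fin k)) (hx : ‖x‖ = 1) :
    (rankOneProj x).PosSemidef :=
  psd_of_proj (rankOneProj_conjTranspose x) (rankOneProj_idem x hx)

lemma one_sub_rankOneProj_psd {k : ℕ} (x : EuclideanSpace ℂ (Fin k)) (hx : ‖x‖ = 1) :
    (1 - rankOneProj x).PosSemidef := by
  refine psd_of_proj ?_ ?_
  · rw [Matrix.conjTranspose_sub, Matrix.conjTranspose_one, rankOneProj_conjTranspose]
  · rw [Matrix.mul_sub, Matrix.sub_mul, Matrix.sub_mul, Matrix.mul_one, Matrix.one_mul,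
      Matrix.mul_one, rankOneProj_idem x hx]
    abel

lemma rankOneProj_trace {k : ℕ} (x : EuclideanSpace ℂ (Fin k)) (hx : ‖x‖ = 1) :
    (rankOneProj x).trace = 1 := by
  rw [Matrix.trace]
  rw [show ∑ i, (rankOneProj x).diag i = ∑ i, (starRingEnd ℂ) (x i) * x i from
    Finset.sum_congr rfl fun i _ => mul_comm _ _]
  exact sum_conj_mul_self x hx

lemma quadform_eq_trace {k : ℕ} (x : EuclideanSpace ℂ (Fin k)) (σ : Matrix (Fin k) (Fin k) ℂ) :
    (∑ i, ∑ j, (starRingEnd ℂ) (x i) * σ i j * x j) = (σ * rankOneProj x).trace := by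
  rw [Matrix.trace]
  refine Finset.sum_congr rfl fun i _ => ?_
  rw [show (σ * rankOneProj x).diag i = ∑ j, σ i j * (x j * (starRingEnd ℂ) (x i)) from rfl]
  refine Finset.sum_congr rfl fun j _ => ?_
  ring

lemma cptp_psd {T : Matrix n n ℂ →ₗ[ℂ] Matrix n' n' ℂ} (hT : IsCPTP T)
    {ρ : Matrix n n ℂ} (hρ : ρ.PosSemidef) : (T ρ).PosSemidef := by
  obtain ⟨m, G, hG, -⟩ := hT
  rw [hG]
  exact psd_sum _ _ fun j _ => hρ.mul_mul_conjTranspose_same _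

lemma cptp_trace {T : Matrix n n ℂ →ₗ[ℂ] Matrix n' n' ℂ} (hT : IsCPTP T)
    (ρ : Matrix n n ℂ) : (T ρ).trace = ρ.trace := by
  obtain ⟨m, G, hG, hG1⟩ := hT
  rw [hG, trace_kraus_sum Finset.univ G ρ, hG1, Matrix.one_mul]

lemma adjoint_trick {T : Matrix n n ℂ →ₗ[ℂ] Matrix n' n' ℂ} (hT : IsCPTP T)
    (X : Matrix n' n' ℂ) (hX : X.PosSemidef) (hX1 : (1 - X).PosSemidef) :
    ∃ D : Matrix n n ℂ, D.PosSemidef ∧ (1 - D).PosSemidef ∧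
      ∀ σ : Matrix n n ℂ, (T σ * X).trace = (σ * D).trace := by
  obtain ⟨m, F, hF, hF1⟩ := hT
  refine ⟨∑ r, (F r)ᴴ * X * F r, ?_, ?_, ?_⟩
  · exact psd_sum _ _ fun r _ => hX.conjTranspose_mul_mul_same _
  · have h : (1 : Matrix n n ℂ) - ∑ r, (F r)ᴴ * X * F r = ∑ r, (F r)ᴴ * (1 - X) * F r := by
      conv_lhs => rw [← hF1]
      rw [← Finset.sum_sub_distrib]
      refine Finset.sum_congr rfl fun r _ => ?_
      rw [Matrix.mul_sub, Matrix.mul_one, Matrix.sub_mul]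
    rw [h]
    exact psd_sum _ _ fun r _ => hX1.conjTranspose_mul_mul_same _
  · intro σ
    rw [hF, Finset.sum_mul, Matrix.trace_sum, Finset.mul_sum, Matrix.trace_sum]
    exact Finset.sum_congr rfl fun r _ => trace_conj_mul (F r) σ X

end AuxState

section AuxTransfer

open Matrix

set_option linter.unusedSectionVars false
set_option maxHeartbeats 1000000

variable {ι κ : Type*} [Fintype ι] [DecidableEq ι] [Fintype κ] [DecidableEq κ]

lemma sqrt_pow_mul_star (mu : ℝ) (hmu : 0 ≤ mu) (l : ℕ) :
    (((Real.sqrt mu : ℝ) : ℂ)) ^ l * star ((((Real.sqrt mu : ℝ) : ℂ)) ^ l)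
      = ((mu : ℝ) : ℂ) ^ l := by
  rw [Complex.star_def, ← Complex.ofReal_pow, Complex.conj_ofReal, ← Complex.ofReal_pow,
    ← Complex.ofReal_mul, ← mul_pow, Real.mul_self_sqrt hmu, Complex.ofReal_pow]

lemma smul_sandwich_pow {A B : Type*} [Fintype A] [Fintype B] (mu : ℝ) (hmu : 0 ≤ mu) (l : ℕ)
    (E : Matrix A B ℂ) (X : Matrix B B ℂ) :
    (((((Real.sqrt mu : ℝ) : ℂ)) ^ l) • E) * X * (((((Real.sqrt mu : ℝ) : ℂ)) ^ l) • E)ᴴ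
      = (((mu : ℝ) : ℂ) ^ l) • (E * X * Eᴴ) := by
  rw [Matrix.conjTranspose_smul, Matrix.mul_smul, Matrix.smul_mul, Matrix.smul_mul, smul_smul]
  congr 1
  rw [mul_comm]
  exact sqrt_pow_mul_star mu hmu l

lemma smul_tp_pow {A B : Type*} [Fintype A] [Fintype B] (mu : ℝ) (hmu : 0 ≤ mu) (l : ℕ)
    (E : Matrix A B ℂ) :
    (((((Real.sqrt mu : ℝ) : ℂ)) ^ l) • E)ᴴ * (((((Real.sqrt mu : ℝ) : ℂ)) ^ l) • E)
      = (((mu : ℝ) : ℂ) ^ l) • (Eᴴ * E) := by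
  rw [Matrix.conjTranspose_smul, Matrix.mul_smul, Matrix.smul_mul, smul_smul]
  rw [sqrt_pow_mul_star mu hmu l]

/-- The combined Kraus family of the mixture `λ·M + μ·N'`. -/
noncomputable def mixK {m₁ m₂ : ℕ} (lam mu : ℝ) (H : Fin m₁ → Matrix κ ι ℂ)
    (G : Fin m₂ → Matrix κ ι ℂ) : Fin m₁ ⊕ Fin m₂ → Matrix κ ι ℂ :=
  Sum.elim (fun j => ((Real.sqrt lam : ℝ) : ℂ) • H j) fun j => ((Real.sqrt mu : ℝ) : ℂ) • G j

lemma smul_conj_sandwich {A B : Type*} [Fintype A] [Fintype B] (c : ℝ) (hc : 0 ≤ c)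
    (V : Matrix A B ℂ) (a : Matrix B B ℂ) :
    (((Real.sqrt c : ℝ) : ℂ) • V) * a * ((((Real.sqrt c : ℝ) : ℂ) • V))ᴴ
      = ((c : ℝ) : ℂ) • (V * a * Vᴴ) := by
  have := smul_sandwich_pow c hc 1 V a
  simpa using this

lemma smul_conj_tp {A B : Type*} [Fintype A] [Fintype B] (c : ℝ) (hc : 0 ≤ c)
    (V : Matrix A B ℂ) :
    ((((Real.sqrt c : ℝ) : ℂ)) • V)ᴴ * ((((Real.sqrt c : ℝ) : ℂ)) • V)
      = ((c : ℝ) : ℂ) • (Vᴴ * V) := by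
  have := smul_tp_pow c hc 1 V
  simpa using this

lemma mixK_kraus {m₁ m₂ : ℕ} {lam mu : ℝ} (hlam : 0 ≤ lam) (hmu : 0 ≤ mu)
    {H : Fin m₁ → Matrix κ ι ℂ} {G : Fin m₂ → Matrix κ ι ℂ}
    {N : Matrix ι ι ℂ →ₗ[ℂ] Matrix κ κ ℂ}
    (hN : ∀ a, N a = ((lam : ℝ) : ℂ) • (∑ j, H j * a * (H j)ᴴ)
      + ((mu : ℝ) : ℂ) • (∑ j, G j * a * (G j)ᴴ)) :
    ∀ a, N a = ∑ j, mixK lam mu H G j * a * (mixK lam mu H G j)ᴴ := by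
  intro a
  rw [hN, Fintype.sum_sum_type]
  simp only [mixK, Sum.elim_inl, Sum.elim_inr]
  rw [Finset.sum_congr rfl fun j _ => smul_conj_sandwich lam hlam (H j) a,
    Finset.sum_congr rfl fun j _ => smul_conj_sandwich mu hmu (G j) a,
    ← Finset.smul_sum, ← Finset.smul_sum]

lemma mixK_tp {m₁ m₂ : ℕ} {lam mu : ℝ} (hlam : 0 ≤ lam) (hmu : 0 ≤ mu) (hsum : lam + mu = 1)
    {H : Fin m₁ → Matrix κ ι ℂ} {G : Fin m₂ → Matrix κ ι ℂ}
    (hH1 : ∑ j, (H j)ᴴ * H j = 1) (hG1 : ∑ j, (G j)ᴴ * G j = 1) :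
    ∑ j, (mixK lam mu H G j)ᴴ * mixK lam mu H G j = 1 := by
  rw [Fintype.sum_sum_type]
  simp only [mixK, Sum.elim_inl, Sum.elim_inr]
  rw [Finset.sum_congr rfl fun j _ => smul_conj_tp lam hlam (H j),
    Finset.sum_congr rfl fun j _ => smul_conj_tp mu hmu (G j),
    ← Finset.smul_sum, ← Finset.smul_sum, hH1, hG1, ← add_smul, ← Complex.ofReal_add, hsum]
  simp

lemma mixK_inr {m₁ m₂ : ℕ} (lam mu : ℝ) (H : Fin m₁ → Matrix κ ι ℂ)
    (G : Fin m₂ → Matrix κ ι ℂ) {l : ℕ} (w : Fin l → Fin m₂) :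
    (eT fun i => mixK lam mu H G (Sum.inr (w i)))
      = ((((Real.sqrt mu : ℝ) : ℂ)) ^ l) • eT fun i => G (w i) := by
  rw [show (fun i => mixK lam mu H G (Sum.inr (w i)))
      = fun i => ((Real.sqrt mu : ℝ) : ℂ) • G (w i) from rfl]
  exact eT_smul _ _

lemma transfer_plain {lam mu : ℝ} (hlam : 0 ≤ lam) (hmu : 0 < mu) (hsum : lam + mu = 1)
    {m₁ m₂ : ℕ} {H : Fin m₁ → Matrix κ ι ℂ} {G : Fin m₂ → Matrix κ ι ℂ}
    (hH1 : ∑ j, (H j)ᴴ * H j = 1) (hG1 : ∑ j, (G j)ᴴ * G j = 1)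
    {N : Matrix ι ι ℂ →ₗ[ℂ] Matrix κ κ ℂ}
    (hN : ∀ a, N a = ((lam : ℝ) : ℂ) • (∑ j, H j * a * (H j)ᴴ)
      + ((mu : ℝ) : ℂ) • (∑ j, G j * a * (G j)ᴴ))
    {l : ℕ} {Tl : Matrix (Fin l → ι) (Fin l → ι) ℂ →ₗ[ℂ] Matrix (Fin l → κ) (Fin l → κ) ℂ}
    (hTl : IsTensorPow l N Tl)
    {ρ' : Matrix (Fin l → ι) (Fin l → ι) ℂ} (hρ : ρ'.PosSemidef) (hρtr : ρ'.trace = 1)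
    {D : Matrix (Fin l → κ) (Fin l → κ) ℂ} (hD : D.PosSemidef) (hD1 : (1 - D).PosSemidef)
    (h1 : (Tl ρ' * D).trace = 1) :
    ((krausPow l G) ρ' * D).trace = 1 := by
  classical
  set K := mixK lam mu H G with hK
  have hKa : ∀ a, N a = ∑ j, K j * a * (K j)ᴴ := mixK_kraus hlam hmu.le hN
  have hK1 : ∑ j, (K j)ᴴ * K j = 1 := mixK_tp hlam hmu.le hsum hH1 hG1
  have hTK : Tl = krausPow l K := isTensorPow_unique hTl (isTensorPow_krausPow hKa)
  set p : (Fin l → Fin m₁ ⊕ Fin m₂) → Prop := fun w => ∀ i, (w i).isRight with hp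
  set V : (Fin l → Fin m₁ ⊕ Fin m₂) → Matrix (Fin l → κ) (Fin l → ι) ℂ :=
    fun w => eT fun i => K (w i) with hVdef
  have hfull : ∑ w, (V w)ᴴ * V w = 1 := krausPow_tp hK1
  have hfilt0 : ∑ w ∈ Finset.univ.filter p, (V w)ᴴ * V w = (((mu : ℝ) : ℂ) ^ l) • 1 := by
    rw [sum_allRight (f := fun w => (V w)ᴴ * V w)]
    have step : ∀ w : Fin l → Fin m₂,
        (V fun i => Sum.inr (w i))ᴴ * (V fun i => Sum.inr (w i))
          = (((mu : ℝ) : ℂ) ^ l) • ((eT fun i => G (w i))ᴴ * eT fun i => G (w i)) := by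
      intro w
      rw [hVdef]
      show (eT fun i => K (Sum.inr (w i)))ᴴ * (eT fun i => K (Sum.inr (w i))) = _
      rw [hK, mixK_inr]
      exact smul_tp_pow mu hmu.le l _
    rw [Finset.sum_congr rfl fun w _ => step w, ← Finset.smul_sum, krausPow_tp hG1]
  have hfiltρ : ∑ w ∈ Finset.univ.filter p, V w * ρ' * (V w)ᴴ
      = (((mu : ℝ) : ℂ) ^ l) • ((krausPow l G) ρ') := by
    rw [sum_allRight (f := fun w => V w * ρ' * (V w)ᴴ)]
    have step : ∀ w : Fin l → Fin m₂,
        (V fun i => Sum.inr (w i)) * ρ' * (V fun i => Sum.inr (w i))ᴴ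
          = (((mu : ℝ) : ℂ) ^ l) • ((eT fun i => G (w i)) * ρ' * (eT fun i => G (w i))ᴴ) := by
      intro w
      rw [hVdef]
      show (eT fun i => K (Sum.inr (w i))) * ρ' * (eT fun i => K (Sum.inr (w i)))ᴴ = _
      rw [hK, mixK_inr]
      exact smul_sandwich_pow mu hmu.le l _ _
    rw [Finset.sum_congr rfl fun w _ => step w, ← Finset.smul_sum, ← krausPow_apply]
  have h1' : ((∑ w, V w * ρ' * (V w)ᴴ) * D).trace = 1 := by
    rw [← krausPow_apply, ← hTK]
    exact h1
  have hcore := core_filter p V ρ' D hρ hρtr hD hD1 hfull (((mu : ℝ) : ℂ) ^ l) hfilt0 h1'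
  rw [hfiltρ, Matrix.smul_mul, Matrix.trace_smul, smul_eq_mul] at hcore
  have hne : (((mu : ℝ) : ℂ)) ^ l ≠ 0 :=
    pow_ne_zero _ (Complex.ofReal_ne_zero.mpr hmu.ne')
  have := mul_left_cancel₀ hne (hcore.trans (mul_one _).symm)
  exact this

lemma appLeft_kraus_comp {u v nF C : Type*} [Fintype u] [DecidableEq u] [Fintype v]
    [DecidableEq v] [Fintype nF] [DecidableEq nF] [Fintype C] [DecidableEq C]
    {J R : Type*} [Fintype J] [Fintype R]
    (T : Matrix u u ℂ →ₗ[ℂ] Matrix v v ℂ) (P : Matrix nF nF ℂ →ₗ[ℂ] Matrix u u ℂ)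
    (Vs : J → Matrix v u ℂ) (E : R → Matrix u nF ℂ)
    (hT : ∀ a, T a = ∑ j, Vs j * a * (Vs j)ᴴ) (hP : ∀ a, P a = ∑ r, E r * a * (E r)ᴴ)
    (σ : Matrix (nF × C) (nF × C) ℂ) :
    appLeft (T ∘ₗ P) σ = ∑ j, kronOne (C := C) (Vs j)
      * (∑ r, kronOne (C := C) (E r) * σ * (kronOne (C := C) (E r))ᴴ) * (kronOne (C := C) (Vs j))ᴴ := by
  have hTP : ∀ a, (T ∘ₗ P) a = ∑ z : J × R, (Vs z.1 * E z.2) * a * (Vs z.1 * E z.2)ᴴ := by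
    intro a
    rw [LinearMap.comp_apply, hT, hP, Fintype.sum_prod_type]
    refine Finset.sum_congr rfl fun j _ => ?_
    rw [Matrix.mul_sum, Matrix.sum_mul]
    refine Finset.sum_congr rfl fun r _ => ?_
    rw [Matrix.conjTranspose_mul]
    simp [Matrix.mul_assoc]
  rw [appLeft_kraus (T ∘ₗ P) (fun z : J × R => Vs z.1 * E z.2) hTP σ, Fintype.sum_prod_type]
  refine Finset.sum_congr rfl fun j _ => ?_
  rw [Matrix.mul_sum, Matrix.sum_mul]
  refine Finset.sum_congr rfl fun r _ => ?_
  rw [kronOne_mul, Matrix.conjTranspose_mul]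
  simp [Matrix.mul_assoc]

lemma transfer_kron {lam mu : ℝ} (hlam : 0 ≤ lam) (hmu : 0 < mu) (hsum : lam + mu = 1)
    {m₁ m₂ : ℕ} {H : Fin m₁ → Matrix κ ι ℂ} {G : Fin m₂ → Matrix κ ι ℂ}
    (hH1 : ∑ j, (H j)ᴴ * H j = 1) (hG1 : ∑ j, (G j)ᴴ * G j = 1)
    {N : Matrix ι ι ℂ →ₗ[ℂ] Matrix κ κ ℂ}
    (hN : ∀ a, N a = ((lam : ℝ) : ℂ) • (∑ j, H j * a * (H j)ᴴ)
      + ((mu : ℝ) : ℂ) • (∑ j, G j * a * (G j)ᴴ))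
    {l : ℕ} {Tl : Matrix (Fin l → ι) (Fin l → ι) ℂ →ₗ[ℂ] Matrix (Fin l → κ) (Fin l → κ) ℂ}
    (hTl : IsTensorPow l N Tl)
    {nF C : Type*} [Fintype nF] [DecidableEq nF] [Fintype C] [DecidableEq C]
    {Pm : Matrix nF nF ℂ →ₗ[ℂ] Matrix (Fin l → ι) (Fin l → ι) ℂ} (hPm : IsCPTP Pm)
    {σ : Matrix (nF × C) (nF × C) ℂ} (hσ : σ.PosSemidef) (hσtr : σ.trace = 1)
    {D : Matrix ((Fin l → κ) × C) ((Fin l → κ) × C) ℂ}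
    (hD : D.PosSemidef) (hD1 : (1 - D).PosSemidef)
    (h1 : (appLeft (Tl ∘ₗ Pm) σ * D).trace = 1) :
    (appLeft ((krausPow l G) ∘ₗ Pm) σ * D).trace = 1 := by
  classical
  obtain ⟨mP, E, hE, hE1⟩ := hPm
  set ρ' : Matrix ((Fin l → ι) × C) ((Fin l → ι) × C) ℂ :=
    ∑ r, kronOne (C := C) (E r) * σ * (kronOne (C := C) (E r))ᴴ with hρ'def
  have hkronE : ∑ r, (kronOne (C := C) (E r))ᴴ * kronOne (C := C) (E r) = 1 := by
    have step : ∀ r, (kronOne (C := C) (E r))ᴴ * kronOne (C := C) (E r)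
        = kronOne (C := C) ((E r)ᴴ * E r) := by
      intro r; rw [kronOne_conjTranspose, ← kronOne_mul]
    rw [Finset.sum_congr rfl fun r _ => step r, ← kronOne_sum, hE1, kronOne_one]
  have hρpsd : ρ'.PosSemidef :=
    psd_sum _ _ fun r _ => hσ.mul_mul_conjTranspose_same _
  have hρtr : ρ'.trace = 1 := by
    rw [hρ'def, trace_kraus_sum, hkronE, Matrix.one_mul, hσtr]
  set K := mixK lam mu H G with hK
  have hKa : ∀ a, N a = ∑ j, K j * a * (K j)ᴴ := mixK_kraus hlam hmu.le hN
  have hK1 : ∑ j, (K j)ᴴ * K j = 1 := mixK_tp hlam hmu.le hsum hH1 hG1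
  have hTK : Tl = krausPow l K := isTensorPow_unique hTl (isTensorPow_krausPow hKa)
  set p : (Fin l → Fin m₁ ⊕ Fin m₂) → Prop := fun w => ∀ i, (w i).isRight with hp
  set V : (Fin l → Fin m₁ ⊕ Fin m₂) → Matrix ((Fin l → κ) × C) ((Fin l → ι) × C) ℂ :=
    fun w => kronOne (C := C) (eT fun i => K (w i)) with hVdef
  have hfull : ∑ w, (V w)ᴴ * V w = 1 := by
    have step : ∀ w : Fin l → Fin m₁ ⊕ Fin m₂, (V w)ᴴ * V w
        = kronOne (C := C) ((eT fun i => K (w i))ᴴ * eT fun i => K (w i)) := by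
      intro w; rw [hVdef]
      show (kronOne (C := C) (eT fun i => K (w i)))ᴴ * kronOne (C := C) (eT fun i => K (w i)) = _
      rw [kronOne_conjTranspose, ← kronOne_mul]
    rw [Finset.sum_congr rfl fun w _ => step w, ← kronOne_sum, krausPow_tp hK1, kronOne_one]
  have hfilt0 : ∑ w ∈ Finset.univ.filter p, (V w)ᴴ * V w = (((mu : ℝ) : ℂ) ^ l) • 1 := by
    rw [sum_allRight (f := fun w => (V w)ᴴ * V w)]
    have step : ∀ w : Fin l → Fin m₂,
        (V fun i => Sum.inr (w i))ᴴ * (V fun i => Sum.inr (w i))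
          = (((mu : ℝ) : ℂ) ^ l) • ((kronOne (C := C) (eT fun i => G (w i)))ᴴ
              * kronOne (C := C) (eT fun i => G (w i))) := by
      intro w
      rw [hVdef]
      show (kronOne (C := C) (eT fun i => K (Sum.inr (w i))))ᴴ
          * kronOne (C := C) (eT fun i => K (Sum.inr (w i))) = _
      rw [hK, mixK_inr, kronOne_smul]
      exact smul_tp_pow mu hmu.le l _
    rw [Finset.sum_congr rfl fun w _ => step w, ← Finset.smul_sum]
    congr 1
    have step2 : ∀ w : Fin l → Fin m₂,
        (kronOne (C := C) (eT fun i => G (w i)))ᴴ * kronOne (C := C) (eT fun i => G (w i))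
          = kronOne (C := C) ((eT fun i => G (w i))ᴴ * eT fun i => G (w i)) := by
      intro w; rw [kronOne_conjTranspose, ← kronOne_mul]
    rw [Finset.sum_congr rfl fun w _ => step2 w, ← kronOne_sum, krausPow_tp hG1, kronOne_one]
  have happ : appLeft (Tl ∘ₗ Pm) σ = ∑ w, V w * ρ' * (V w)ᴴ := by
    rw [hTK]
    exact appLeft_kraus_comp _ _ _ E (fun a => krausPow_apply l K a) hE σ
  have happG : appLeft ((krausPow l G) ∘ₗ Pm) σ
      = ∑ w : Fin l → Fin m₂, kronOne (C := C) (eT fun i => G (w i)) * ρ'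
          * (kronOne (C := C) (eT fun i => G (w i)))ᴴ :=
    appLeft_kraus_comp _ _ _ E (fun a => krausPow_apply l G a) hE σ
  have hfiltρ : ∑ w ∈ Finset.univ.filter p, V w * ρ' * (V w)ᴴ
      = (((mu : ℝ) : ℂ) ^ l) • appLeft ((krausPow l G) ∘ₗ Pm) σ := by
    rw [sum_allRight (f := fun w => V w * ρ' * (V w)ᴴ), happG]
    have step : ∀ w : Fin l → Fin m₂,
        (V fun i => Sum.inr (w i)) * ρ' * (V fun i => Sum.inr (w i))ᴴ
          = (((mu : ℝ) : ℂ) ^ l) • (kronOne (C := C) (eT fun i => G (w i)) * ρ'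
              * (kronOne (C := C) (eT fun i => G (w i)))ᴴ) := by
      intro w
      rw [hVdef]
      show kronOne (C := C) (eT fun i => K (Sum.inr (w i))) * ρ'
          * (kronOne (C := C) (eT fun i => K (Sum.inr (w i))))ᴴ = _
      rw [hK, mixK_inr, kronOne_smul]
      exact smul_sandwich_pow mu hmu.le l _ _
    rw [Finset.sum_congr rfl fun w _ => step w, ← Finset.smul_sum]
  have h1' : ((∑ w, V w * ρ' * (V w)ᴴ) * D).trace = 1 := by rw [← happ]; exact h1
  have hcore := core_filter p V ρ' D hρpsd hρtr hD hD1 hfull (((mu : ℝ) : ℂ) ^ l) hfilt0 h1'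
  rw [hfiltρ, Matrix.smul_mul, Matrix.trace_smul, smul_eq_mul] at hcore
  have hne : (((mu : ℝ) : ℂ)) ^ l ≠ 0 :=
    pow_ne_zero _ (Complex.ofReal_ne_zero.mpr hmu.ne')
  exact mul_left_cancel₀ hne (hcore.trans (mul_one _).symm)

end AuxTransfer

section AuxFinal

open Matrix

set_option linter.unusedSectionVars false
set_option maxHeartbeats 1000000

variable {ι κ : Type*} [Fintype ι] [DecidableEq ι] [Fintype κ] [DecidableEq κ]

lemma mix_of_relint {V : Type*} [AddCommGroup V] [Module ℂ V] {F : Set V} {N N' : V}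
    (hN : AlgRelInterior F N) (hN' : AlgRelInterior F N') :
    ∃ (lam mu : ℝ) (M : V), 0 ≤ lam ∧ 0 < mu ∧ lam + mu = 1 ∧ M ∈ F ∧
      N = ((lam : ℝ) : ℂ) • M + ((mu : ℝ) : ℂ) • N' := by
  obtain ⟨t, ht, hM⟩ := hN.2 N' hN'.1
  have ht0 : (0 : ℝ) < t := lt_trans one_pos ht
  refine ⟨1 / t, 1 - 1 / t, N' + ((t : ℝ) : ℂ) • (N - N'), by positivity, by
    rw [sub_pos]; rw [div_lt_one ht0]; exact ht, by ring, hM, ?_⟩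
  have hc : ((t : ℝ) : ℂ) ≠ 0 := Complex.ofReal_ne_zero.mpr ht0.ne'
  have h1t : ((1 / t : ℝ) : ℂ) = ((t : ℝ) : ℂ)⁻¹ := by
    push_cast
    rw [one_div]
  have h2t : ((1 - 1 / t : ℝ) : ℂ) = 1 - ((t : ℝ) : ℂ)⁻¹ := by
    push_cast
    rw [one_div]
  rw [h1t, h2t, smul_add, smul_smul, inv_mul_cancel₀ hc, one_smul, sub_smul, one_smul]
  abel

lemma cptp_of_mem {F : Set (Matrix ι ι ℂ →ₗ[ℂ] Matrix κ κ ℂ)}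
    (hFchan : F ⊆ {T : Matrix ι ι ℂ →ₗ[ℂ] Matrix κ κ ℂ | IsCPTP T}) {M} (h : M ∈ F) :
    IsCPTP M := hFchan h

lemma mix_apply {N N' M : Matrix ι ι ℂ →ₗ[ℂ] Matrix κ κ ℂ} {lam mu : ℝ}
    {m₁ m₂ : ℕ} {H : Fin m₁ → Matrix κ ι ℂ} {G : Fin m₂ → Matrix κ ι ℂ}
    (hH : ∀ a, M a = ∑ j, H j * a * (H j)ᴴ) (hG : ∀ a, N' a = ∑ j, G j * a * (G j)ᴴ)
    (hmixEq : N = ((lam : ℝ) : ℂ) • M + ((mu : ℝ) : ℂ) • N') :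
    ∀ a, N a = ((lam : ℝ) : ℂ) • (∑ j, H j * a * (H j)ᴴ)
      + ((mu : ℝ) : ℂ) • (∑ j, G j * a * (G j)ᴴ) := by
  intro a
  rw [hmixEq]
  simp only [LinearMap.add_apply, LinearMap.smul_apply]
  rw [hH, hG]

lemma one_sub_psd_of_sum {M : ℕ} (D : Fin M → Matrix κ κ ℂ)
    (hDpsd : ∀ m, (D m).PosSemidef) (hDsum : ∑ m, D m = 1) (m : Fin M) :
    ((1 : Matrix κ κ ℂ) - D m).PosSemidef := by
  have h : (1 : Matrix κ κ ℂ) - D m = ∑ m' ∈ Finset.univ.erase m, D m' := by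
    rw [← hDsum, ← Finset.add_sum_erase _ _ (Finset.mem_univ m)]
    abel
  rw [h]
  exact psd_sum _ _ fun m' _ => hDpsd m'

lemma kq_mono {N N' M : Matrix ι ι ℂ →ₗ[ℂ] Matrix κ κ ℂ} {lam mu : ℝ}
    (hlam : 0 ≤ lam) (hmu : 0 < mu) (hsum : lam + mu = 1)
    (hM : IsCPTP M) (hN'c : IsCPTP N')
    (hmixEq : N = ((lam : ℝ) : ℂ) • M + ((mu : ℝ) : ℂ) • N') (l k : ℕ)
    (h : 0 < k ∧
      ∃ (Tl : Matrix (Fin l → ι) (Fin l → ι) ℂ →ₗ[ℂ] Matrix (Fin l → κ) (Fin l → κ) ℂ)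
        (P : Matrix (Fin k) (Fin k) ℂ →ₗ[ℂ] Matrix (Fin l → ι) (Fin l → ι) ℂ)
        (R : Matrix (Fin l → κ) (Fin l → κ) ℂ →ₗ[ℂ] Matrix (Fin k) (Fin k) ℂ),
        IsTensorPow l N Tl ∧ IsCPTP P ∧ IsCPTP R ∧
        ∀ x : EuclideanSpace ℂ (Fin k), ‖x‖ = 1 →
          ∑ i, ∑ j, (starRingEnd ℂ) (x i) * (R (Tl (P (rankOneProj x)))) i j * x j = 1) :
    0 < k ∧
      ∃ (Tl : Matrix (Fin l → ι) (Fin l → ι) ℂ →ₗ[ℂ] Matrix (Fin l → κ) (Fin l → κ) ℂ)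
        (P : Matrix (Fin k) (Fin k) ℂ →ₗ[ℂ] Matrix (Fin l → ι) (Fin l → ι) ℂ)
        (R : Matrix (Fin l → κ) (Fin l → κ) ℂ →ₗ[ℂ] Matrix (Fin k) (Fin k) ℂ),
        IsTensorPow l N' Tl ∧ IsCPTP P ∧ IsCPTP R ∧
        ∀ x : EuclideanSpace ℂ (Fin k), ‖x‖ = 1 →
          ∑ i, ∑ j, (starRingEnd ℂ) (x i) * (R (Tl (P (rankOneProj x)))) i j * x j = 1 := by
  obtain ⟨hk, Tl, P, R, hTl, hP, hR, hcond⟩ := h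
  obtain ⟨m₁, H, hH, hH1⟩ := hM
  obtain ⟨m₂, G, hG, hG1⟩ := hN'c
  have hN : ∀ a, N a = ((lam : ℝ) : ℂ) • (∑ j, H j * a * (H j)ᴴ)
      + ((mu : ℝ) : ℂ) • (∑ j, G j * a * (G j)ᴴ) := mix_apply hH hG hmixEq
  refine ⟨hk, krausPow l G, P, R, isTensorPow_krausPow hG, hP, hR, ?_⟩
  intro x hx
  obtain ⟨D, hD, hD1, hDtr⟩ := adjoint_trick hR (rankOneProj x)
    (rankOneProj_psd x hx) (one_sub_rankOneProj_psd x hx)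
  have hρpsd : (P (rankOneProj x)).PosSemidef := cptp_psd hP (rankOneProj_psd x hx)
  have hρtr : (P (rankOneProj x)).trace = 1 := by
    rw [cptp_trace hP, rankOneProj_trace x hx]
  have h1 : (Tl (P (rankOneProj x)) * D).trace = 1 := by
    have hc := hcond x hx
    rw [quadform_eq_trace, hDtr] at hc
    exact hc
  have h2 := transfer_plain hlam hmu hsum hH1 hG1 hN hTl hρpsd hρtr hD hD1 h1
  rw [quadform_eq_trace, hDtr]
  exact h2

lemma mc_mono {N N' M : Matrix ι ι ℂ →ₗ[ℂ] Matrix κ κ ℂ} {lam mu : ℝ}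
    (hlam : 0 ≤ lam) (hmu : 0 < mu) (hsum : lam + mu = 1)
    (hM : IsCPTP M) (hN'c : IsCPTP N')
    (hmixEq : N = ((lam : ℝ) : ℂ) • M + ((mu : ℝ) : ℂ) • N') (l Mc : ℕ)
    (h : 0 < Mc ∧
      ∃ (Tl : Matrix (Fin l → ι) (Fin l → ι) ℂ →ₗ[ℂ] Matrix (Fin l → κ) (Fin l → κ) ℂ)
        (ρ : Fin Mc → Matrix (Fin l → ι) (Fin l → ι) ℂ)
        (D : Fin Mc → Matrix (Fin l → κ) (Fin l → κ) ℂ),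
        IsTensorPow l N Tl ∧ (∀ m, IsState (ρ m)) ∧ (∀ m, (D m).PosSemidef) ∧
        (∑ m, D m = 1) ∧ ∀ m, (Tl (ρ m) * D m).trace = 1) :
    0 < Mc ∧
      ∃ (Tl : Matrix (Fin l → ι) (Fin l → ι) ℂ →ₗ[ℂ] Matrix (Fin l → κ) (Fin l → κ) ℂ)
        (ρ : Fin Mc → Matrix (Fin l → ι) (Fin l → ι) ℂ)
        (D : Fin Mc → Matrix (Fin l → κ) (Fin l → κ) ℂ),
        IsTensorPow l N' Tl ∧ (∀ m, IsState (ρ m)) ∧ (∀ m, (D m).PosSemidef) ∧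
        (∑ m, D m = 1) ∧ ∀ m, (Tl (ρ m) * D m).trace = 1 := by
  obtain ⟨hk, Tl, ρ, D, hTl, hρ, hDpsd, hDsum, hcond⟩ := h
  obtain ⟨m₁, H, hH, hH1⟩ := hM
  obtain ⟨m₂, G, hG, hG1⟩ := hN'c
  have hN : ∀ a, N a = ((lam : ℝ) : ℂ) • (∑ j, H j * a * (H j)ᴴ)
      + ((mu : ℝ) : ℂ) • (∑ j, G j * a * (G j)ᴴ) := mix_apply hH hG hmixEq
  refine ⟨hk, krausPow l G, ρ, D, isTensorPow_krausPow hG, hρ, hDpsd, hDsum, ?_⟩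
  intro m
  exact transfer_plain hlam hmu hsum hH1 hG1 hN hTl (hρ m).1 (hρ m).2 (hDpsd m)
    (one_sub_psd_of_sum D hDpsd hDsum m) (hcond m)

lemma mea_mono {N N' M : Matrix ι ι ℂ →ₗ[ℂ] Matrix κ κ ℂ} {lam mu : ℝ}
    (hlam : 0 ≤ lam) (hmu : 0 < mu) (hsum : lam + mu = 1)
    (hM : IsCPTP M) (hN'c : IsCPTP N')
    (hmixEq : N = ((lam : ℝ) : ℂ) • M + ((mu : ℝ) : ℂ) • N') (l Mc : ℕ)
    (h : 0 < Mc ∧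
      ∃ (nF nF' : ℕ)
        (Tl : Matrix (Fin l → ι) (Fin l → ι) ℂ →ₗ[ℂ] Matrix (Fin l → κ) (Fin l → κ) ℂ)
        (σ : Matrix (Fin nF × Fin nF') (Fin nF × Fin nF') ℂ)
        (P : Fin Mc → (Matrix (Fin nF) (Fin nF) ℂ →ₗ[ℂ] Matrix (Fin l → ι) (Fin l → ι) ℂ))
        (D : Fin Mc → Matrix ((Fin l → κ) × Fin nF') ((Fin l → κ) × Fin nF') ℂ),
        IsTensorPow l N Tl ∧ IsState σ ∧ (∀ m, IsCPTP (P m)) ∧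
        (∀ m, (D m).PosSemidef) ∧ (∑ m, D m = 1) ∧
        ∀ m, (appLeft (Tl ∘ₗ P m) σ * D m).trace = 1) :
    0 < Mc ∧
      ∃ (nF nF' : ℕ)
        (Tl : Matrix (Fin l → ι) (Fin l → ι) ℂ →ₗ[ℂ] Matrix (Fin l → κ) (Fin l → κ) ℂ)
        (σ : Matrix (Fin nF × Fin nF') (Fin nF × Fin nF') ℂ)
        (P : Fin Mc → (Matrix (Fin nF) (Fin nF) ℂ →ₗ[ℂ] Matrix (Fin l → ι) (Fin l → ι) ℂ))
        (D : Fin Mc → Matrix ((Fin l → κ) × Fin nF') ((Fin l → κ) × Fin nF') ℂ),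
        IsTensorPow l N' Tl ∧ IsState σ ∧ (∀ m, IsCPTP (P m)) ∧
        (∀ m, (D m).PosSemidef) ∧ (∑ m, D m = 1) ∧
        ∀ m, (appLeft (Tl ∘ₗ P m) σ * D m).trace = 1 := by
  obtain ⟨hk, nF, nF', Tl, σ, P, D, hTl, hσ, hPc, hDpsd, hDsum, hcond⟩ := h
  obtain ⟨m₁, H, hH, hH1⟩ := hM
  obtain ⟨m₂, G, hG, hG1⟩ := hN'c
  have hN : ∀ a, N a = ((lam : ℝ) : ℂ) • (∑ j, H j * a * (H j)ᴴ)
      + ((mu : ℝ) : ℂ) • (∑ j, G j * a * (G j)ᴴ) := mix_apply hH hG hmixEq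
  refine ⟨hk, nF, nF', krausPow l G, σ, P, D, isTensorPow_krausPow hG, hσ, hPc,
    hDpsd, hDsum, ?_⟩
  intro m
  exact transfer_kron hlam hmu hsum hH1 hG1 hN hTl (hPc m) hσ.1 hσ.2 (hDpsd m)
    (one_sub_psd_of_sum D hDpsd hDsum m) (hcond m)

end AuxFinal

/-- the zero-error capacities `Q₀`, `C₀` and `C₀EA` are constant on the
relative interior of any convex subset `F` of the set of channels (in particular on
the relative interior of any face of `C(H,K)`). -/
theorem stmt_12 (F : Set (Matrix ι ι ℂ →ₗ[ℂ] Matrix κ κ ℂ))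
    (hFchan : F ⊆ {T : Matrix ι ι ℂ →ₗ[ℂ] Matrix κ κ ℂ | IsCPTP T})
    (hFconv : ∀ x ∈ F, ∀ y ∈ F, ∀ t : ℝ, 0 ≤ t → t ≤ 1 →
      ((t : ℝ) : ℂ) • x + (((1 - t : ℝ)) : ℂ) • y ∈ F)
    (N N' : Matrix ι ι ℂ →ₗ[ℂ] Matrix κ κ ℂ)
    (hN : AlgRelInterior F N) (hN' : AlgRelInterior F N') :
    Q0 N = Q0 N' ∧ C0 N = C0 N' ∧ C0EA N = C0EA N' := by
  obtain ⟨lam1, mu1, M1, hlam1, hmu1, hsum1, hM1F, hmixEq1⟩ := mix_of_relint hN hN'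
  obtain ⟨lam2, mu2, M2, hlam2, hmu2, hsum2, hM2F, hmixEq2⟩ := mix_of_relint hN' hN
  have hM1 : IsCPTP M1 := hFchan hM1F
  have hM2 : IsCPTP M2 := hFchan hM2F
  have hNc : IsCPTP N := hFchan hN.1
  have hN'c : IsCPTP N' := hFchan hN'.1
  have hkq : ∀ l, kQuantum l N = kQuantum l N' := fun l =>
    congrArg sSup (Set.ext fun k =>
      ⟨kq_mono hlam1 hmu1 hsum1 hM1 hN'c hmixEq1 l k,
       kq_mono hlam2 hmu2 hsum2 hM2 hNc hmixEq2 l k⟩)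
  have hmc : ∀ l, mClassical l N = mClassical l N' := fun l =>
    congrArg sSup (Set.ext fun k =>
      ⟨mc_mono hlam1 hmu1 hsum1 hM1 hN'c hmixEq1 l k,
       mc_mono hlam2 hmu2 hsum2 hM2 hNc hmixEq2 l k⟩)
  have hmea : ∀ l, mEA l N = mEA l N' := fun l =>
    congrArg sSup (Set.ext fun k =>
      ⟨mea_mono hlam1 hmu1 hsum1 hM1 hN'c hmixEq1 l k,
       mea_mono hlam2 hmu2 hsum2 hM2 hNc hmixEq2 l k⟩)
  refine ⟨?_, ?_, ?_⟩
  · unfold Q0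
    congr 1
    funext l
    rw [hkq l]
  · unfold C0
    congr 1
    funext l
    rw [hmc l]
  · unfold C0EA
    congr 1
    funext l
    rw [hmea l]
end
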